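/- Let A = k[x]/(x^p) and B = k[y]/(y^p) over a field k of characteristic p > 2. Define τ: B⊗A → A⊗B by τ(y^r ⊗ x^ℓ) = ∑_{t=0}^{r} C(r,t)(1/2)^t [ℓ]^[t] x^{ℓ+t} ⊗ y^{r−t} (extended k-linearly, where x^m = 0 for m ≥ p and y^m = 0 for m ≥ p). Then τ is bijective, with inverse given by τ^{-1}(x^ℓ ⊗ y^r) = ∑_{t=0}^{r} C(r,t)(−1/2)^t [ℓ]^[t] y^{r−t} ⊗ x^{ℓ+t}. -/

import Mathlib

open TensorProduct Polynomial

/-- The truncated polynomial ring `k[X]/(X^p)`. -/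
abbrev TruncPoly (k : Type*) [Field k] (p : ℕ) : Type _ :=
  Polynomial k ⧸ Ideal.span {(Polynomial.X : Polynomial k) ^ p}

/-- The generator of the truncated polynomial ring. -/
noncomputable def tgen (k : Type*) [Field k] (p : ℕ) : TruncPoly k p :=
  Ideal.Quotient.mk _ Polynomial.X

section Aux

variable {k : Type*} [Field k] {p : ℕ}

lemma tgen_pow_zero {m : ℕ} (hm : p ≤ m) : tgen k p ^ m = 0 := by
  have hp : tgen k p ^ p = 0 := by
    rw [tgen, ← map_pow]
    exact Ideal.Quotient.eq_zero_iff_mem.mpr (Ideal.subset_span rfl)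
  have : m = p + (m - p) := by omega
  rw [this, pow_add, hp, zero_mul]

lemma span_tgen : Submodule.span k (Set.range fun i : ℕ => tgen k p ^ i) = ⊤ := by
  rw [eq_top_iff]
  rintro z -
  obtain ⟨q, rfl⟩ := Ideal.Quotient.mk_surjective z
  induction q using Polynomial.induction_on' with
  | add f g hf hg => rw [map_add]; exact Submodule.add_mem _ hf hg
  | monomial n a =>
      have h1 : (Ideal.Quotient.mk (Ideal.span {(X : Polynomial k) ^ p})
          ((monomial n) a) : TruncPoly k p) = a • tgen k p ^ n := by
        rw [← Polynomial.C_mul_X_pow_eq_monomial, map_mul, map_pow, tgen]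
        rw [show ((Ideal.Quotient.mk (Ideal.span {(X : Polynomial k) ^ p})) (C a) :
          TruncPoly k p) = algebraMap k (TruncPoly k p) a from rfl, ← Algebra.smul_def]
      rw [h1]
      exact Submodule.smul_mem _ a (Submodule.subset_span ⟨n, rfl⟩)

lemma ascFactorial_add' (ℓ t s : ℕ) :
    ℓ.ascFactorial (t + s) = ℓ.ascFactorial t * (ℓ + t).ascFactorial s := by
  induction s with
  | zero => simp
  | succ s ih =>
      rw [Nat.add_succ, Nat.ascFactorial_succ, Nat.ascFactorial_succ, ih,
        show ℓ + (t + s) = ℓ + t + s from (Nat.add_assoc ℓ t s).symm]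
      ring

/-- Triangle sum reindexing. -/
lemma tri {M : Type*} [AddCommMonoid M] (n : ℕ) (f : ℕ → ℕ → M) :
    ∑ t ∈ Finset.range (n + 1), ∑ s ∈ Finset.range (n - t + 1), f t s
      = ∑ u ∈ Finset.range (n + 1), ∑ t ∈ Finset.range (u + 1), f t (u - t) := by
  rw [Finset.sum_sigma', Finset.sum_sigma']
  refine Finset.sum_nbij' (fun x => ⟨x.1 + x.2, x.1⟩) (fun x => ⟨x.2, x.1 - x.2⟩)
    ?_ ?_ ?_ ?_ ?_
  · simp only [Finset.mem_sigma, Finset.mem_range, Sigma.forall]; intro a b; omega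
  · simp only [Finset.mem_sigma, Finset.mem_range, Sigma.forall]; intro a b; omega
  · simp only [Finset.mem_sigma, Finset.mem_range, Sigma.forall]
    intro a b hab
    show (⟨a, a + b - a⟩ : (_ : ℕ) × ℕ) = ⟨a, b⟩
    simp only [show a + b - a = b from by omega]
  · simp only [Finset.mem_sigma, Finset.mem_range, Sigma.forall]
    intro a b hab
    show (⟨b + (a - b), b⟩ : (_ : ℕ) × ℕ) = ⟨a, b⟩
    simp only [show b + (a - b) = a from by omega]
  · simp only [Finset.mem_sigma, Finset.mem_range, Sigma.forall]
    intro a b hab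
    show f a b = f a (a + b - a)
    simp only [show a + b - a = b from by omega]

/-- The key algebraic identity: the double sum collapses. -/
lemma key {M : Type*} [AddCommMonoid M] [Module k M]
    (c : k) (r ℓ : ℕ) (v : ℕ → ℕ → M) :
    ∑ t ∈ Finset.range (r + 1), ∑ s ∈ Finset.range (r - t + 1),
      ((((r.choose t : k)) * c ^ t * (ℓ.ascFactorial t : k)) *
        ((((r - t).choose s : k)) * (-c) ^ s * ((ℓ + t).ascFactorial s : k))) •
          v (r - t - s) (ℓ + t + s)
      = v r ℓ := by
  rw [tri]
  have step : ∀ u ∈ Finset.range (r + 1),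
      (∑ t ∈ Finset.range (u + 1),
        ((((r.choose t : k)) * c ^ t * (ℓ.ascFactorial t : k)) *
          ((((r - t).choose (u - t) : k)) * (-c) ^ (u - t) *
            ((ℓ + t).ascFactorial (u - t) : k))) •
              v (r - t - (u - t)) (ℓ + t + (u - t)))
      = if u = 0 then v r ℓ else 0 := by
    intro u hu
    have hur : u ≤ r := by simpa [Nat.lt_succ_iff] using hu
    have hterm : ∀ t ∈ Finset.range (u + 1),
        ((((r.choose t : k)) * c ^ t * (ℓ.ascFactorial t : k)) *
          ((((r - t).choose (u - t) : k)) * (-c) ^ (u - t) *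
            ((ℓ + t).ascFactorial (u - t) : k))) •
              v (r - t - (u - t)) (ℓ + t + (u - t))
        = (((r.choose u : k) * (ℓ.ascFactorial u : k)) *
            (c ^ t * (-c) ^ (u - t) * (u.choose t : k))) • v (r - u) (ℓ + u) := by
      intro t ht
      have htu : t ≤ u := by simpa [Nat.lt_succ_iff] using ht
      have e1 : r - t - (u - t) = r - u := by omega
      have e2 : ℓ + t + (u - t) = ℓ + u := by omega
      rw [e1, e2]
      congr 1
      have e3 : (r.choose u : k) * (u.choose t : k)
          = (r.choose t : k) * ((r - t).choose (u - t) : k) := by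
        exact_mod_cast congrArg (Nat.cast (R := k)) (Nat.choose_mul (n := r) htu)
      have e4 : (ℓ.ascFactorial u : k)
          = (ℓ.ascFactorial t : k) * ((ℓ + t).ascFactorial (u - t) : k) := by
        have h5 := ascFactorial_add' ℓ t (u - t)
        rw [show t + (u - t) = u by omega] at h5
        exact_mod_cast congrArg (Nat.cast (R := k)) h5
      calc ((r.choose t : k)) * c ^ t * (ℓ.ascFactorial t : k) *
            ((((r - t).choose (u - t) : k)) * (-c) ^ (u - t) *
              ((ℓ + t).ascFactorial (u - t) : k))
          = ((r.choose t : k) * ((r - t).choose (u - t) : k)) *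
              ((ℓ.ascFactorial t : k) * ((ℓ + t).ascFactorial (u - t) : k)) *
              (c ^ t * (-c) ^ (u - t)) := by ring
        _ = ((r.choose u : k) * (u.choose t : k)) * (ℓ.ascFactorial u : k) *
              (c ^ t * (-c) ^ (u - t)) := by rw [← e3, ← e4]
        _ = ((r.choose u : k) * (ℓ.ascFactorial u : k)) *
              (c ^ t * (-c) ^ (u - t) * (u.choose t : k)) := by ring
    rw [Finset.sum_congr rfl hterm, ← Finset.sum_smul]
    have hb : (∑ t ∈ Finset.range (u + 1),
        ((r.choose u : k) * (ℓ.ascFactorial u : k)) *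
          (c ^ t * (-c) ^ (u - t) * (u.choose t : k)))
        = ((r.choose u : k) * (ℓ.ascFactorial u : k)) * (0 : k) ^ u := by
      rw [← Finset.mul_sum, ← add_pow c (-c) u, add_neg_cancel]
    rw [hb]
    rcases Nat.eq_zero_or_pos u with h0 | h0
    · subst h0; simp
    · rw [if_neg (by omega), zero_pow (by omega), mul_zero, zero_smul]
  rw [Finset.sum_congr rfl step, Finset.sum_ite_eq' (Finset.range (r + 1)) 0
    (fun _ => v r ℓ)]
  simp

end Aux

set_option maxHeartbeats 1000000 in
set_option synthInstance.maxHeartbeats 200000 in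
/-- Let `A = k[x]/(x^p)`, `B = k[y]/(y^p)`.  A `k`-linear map
`τ : B ⊗ A → A ⊗ B` with `τ(y^r ⊗ x^ℓ) = ∑_t C(r,t)(1/2)^t [ℓ]^[t] x^{ℓ+t} ⊗ y^{r−t}`
on the monomial basis is bijective, with inverse given by
`x^ℓ ⊗ y^r ↦ ∑_t C(r,t)(−1/2)^t [ℓ]^[t] y^{r−t} ⊗ x^{ℓ+t}`. -/
theorem stmt13 (k : Type*) [Field k] (p : ℕ) (hp : p.Prime) (hp2 : 2 < p) [CharP k p]
    (τ : (TruncPoly k p) ⊗[k] (TruncPoly k p) →ₗ[k] (TruncPoly k p) ⊗[k] (TruncPoly k p))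
    (σ : (TruncPoly k p) ⊗[k] (TruncPoly k p) →ₗ[k] (TruncPoly k p) ⊗[k] (TruncPoly k p))
    (hτ : ∀ r ℓ : ℕ, r < p → ℓ < p →
      τ (((tgen k p) ^ r) ⊗ₜ[k] ((tgen k p) ^ ℓ)) =
        ∑ t ∈ Finset.range (r + 1),
          ((r.choose t : k) * (2 : k)⁻¹ ^ t * (ℓ.ascFactorial t : k)) •
            (((tgen k p) ^ (ℓ + t)) ⊗ₜ[k] ((tgen k p) ^ (r - t))))
    (hσ : ∀ ℓ r : ℕ, ℓ < p → r < p →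
      σ (((tgen k p) ^ ℓ) ⊗ₜ[k] ((tgen k p) ^ r)) =
        ∑ t ∈ Finset.range (r + 1),
          ((r.choose t : k) * (-(2 : k)⁻¹) ^ t * (ℓ.ascFactorial t : k)) •
            (((tgen k p) ^ (r - t)) ⊗ₜ[k] ((tgen k p) ^ (ℓ + t)))) :
    Function.Bijective τ ∧ σ.comp τ = LinearMap.id ∧ τ.comp σ = LinearMap.id := by
  -- extend hσ to all first exponents
  have hσ' : ∀ ℓ r : ℕ, r < p →
      σ (((tgen k p) ^ ℓ) ⊗ₜ[k] ((tgen k p) ^ r)) =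
        ∑ t ∈ Finset.range (r + 1),
          ((r.choose t : k) * (-(2 : k)⁻¹) ^ t * (ℓ.ascFactorial t : k)) •
            (((tgen k p) ^ (r - t)) ⊗ₜ[k] ((tgen k p) ^ (ℓ + t))) := by
    intro ℓ r hr
    by_cases hℓ : ℓ < p
    · exact hσ ℓ r hℓ hr
    · rw [tgen_pow_zero (m := ℓ) (by omega), zero_tmul, LinearMap.map_zero]
      refine (Finset.sum_eq_zero fun t _ => ?_).symm
      rw [tgen_pow_zero (m := ℓ + t) (by omega), tmul_zero, smul_zero]
  have hτ' : ∀ r ℓ : ℕ, r < p →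
      τ (((tgen k p) ^ r) ⊗ₜ[k] ((tgen k p) ^ ℓ)) =
        ∑ t ∈ Finset.range (r + 1),
          ((r.choose t : k) * (2 : k)⁻¹ ^ t * (ℓ.ascFactorial t : k)) •
            (((tgen k p) ^ (ℓ + t)) ⊗ₜ[k] ((tgen k p) ^ (r - t))) := by
    intro r ℓ hr
    by_cases hℓ : ℓ < p
    · exact hτ r ℓ hr hℓ
    · rw [tgen_pow_zero (m := ℓ) (by omega), tmul_zero, LinearMap.map_zero]
      refine (Finset.sum_eq_zero fun t _ => ?_).symm
      rw [tgen_pow_zero (m := ℓ + t) (by omega), zero_tmul, smul_zero]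
  -- the two monomial computations
  have main1 : ∀ r ℓ : ℕ,
      σ (τ (((tgen k p) ^ r) ⊗ₜ[k] ((tgen k p) ^ ℓ)))
        = ((tgen k p) ^ r) ⊗ₜ[k] ((tgen k p) ^ ℓ) := by
    intro r ℓ
    by_cases hr : r < p
    · rw [hτ' r ℓ hr, map_sum]
      simp_rw [LinearMap.map_smul]
      have inner : ∀ t ∈ Finset.range (r + 1),
          ((r.choose t : k) * (2 : k)⁻¹ ^ t * (ℓ.ascFactorial t : k)) •
            σ (((tgen k p) ^ (ℓ + t)) ⊗ₜ[k] ((tgen k p) ^ (r - t)))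
          = ∑ s ∈ Finset.range (r - t + 1),
              ((((r.choose t : k)) * (2 : k)⁻¹ ^ t * (ℓ.ascFactorial t : k)) *
                ((((r - t).choose s : k)) * (-(2 : k)⁻¹) ^ s *
                  ((ℓ + t).ascFactorial s : k))) •
                (((tgen k p) ^ (r - t - s)) ⊗ₜ[k] ((tgen k p) ^ (ℓ + t + s))) := by
        intro t ht
        rw [hσ' (ℓ + t) (r - t) (by omega), Finset.smul_sum]
        refine Finset.sum_congr rfl fun s hs => ?_
        rw [smul_smul]
      rw [Finset.sum_congr rfl inner]
      exact key ((2 : k)⁻¹) r ℓ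
        (fun a b => ((tgen k p) ^ a) ⊗ₜ[k] ((tgen k p) ^ b))
    · rw [tgen_pow_zero (m := r) (by omega), zero_tmul, LinearMap.map_zero,
        LinearMap.map_zero]
  have main2 : ∀ ℓ r : ℕ,
      τ (σ (((tgen k p) ^ ℓ) ⊗ₜ[k] ((tgen k p) ^ r)))
        = ((tgen k p) ^ ℓ) ⊗ₜ[k] ((tgen k p) ^ r) := by
    intro ℓ r
    by_cases hr : r < p
    · rw [hσ' ℓ r hr, map_sum]
      simp_rw [LinearMap.map_smul]
      have inner : ∀ t ∈ Finset.range (r + 1),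
          ((r.choose t : k) * (-(2 : k)⁻¹) ^ t * (ℓ.ascFactorial t : k)) •
            τ (((tgen k p) ^ (r - t)) ⊗ₜ[k] ((tgen k p) ^ (ℓ + t)))
          = ∑ s ∈ Finset.range (r - t + 1),
              ((((r.choose t : k)) * (-(2 : k)⁻¹) ^ t * (ℓ.ascFactorial t : k)) *
                ((((r - t).choose s : k)) * (-(-(2 : k)⁻¹)) ^ s *
                  ((ℓ + t).ascFactorial s : k))) •
                (((tgen k p) ^ (ℓ + t + s)) ⊗ₜ[k] ((tgen k p) ^ (r - t - s))) := by
        intro t ht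
        rw [hτ' (r - t) (ℓ + t) (by omega), Finset.smul_sum, neg_neg]
        refine Finset.sum_congr rfl fun s hs => ?_
        rw [smul_smul]
      rw [Finset.sum_congr rfl inner]
      exact key (-(2 : k)⁻¹) r ℓ
        (fun a b => ((tgen k p) ^ b) ⊗ₜ[k] ((tgen k p) ^ a))
    · rw [tgen_pow_zero (m := r) (by omega), tmul_zero, LinearMap.map_zero,
        LinearMap.map_zero]
  -- extend to all pure tensors by span induction
  have H1 : ∀ a b : TruncPoly k p, σ (τ (a ⊗ₜ[k] b)) = a ⊗ₜ[k] b := by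
    intro a b
    have ha : a ∈ Submodule.span k (Set.range fun i : ℕ => tgen k p ^ i) := by
      rw [span_tgen]; trivial
    have hb : b ∈ Submodule.span k (Set.range fun i : ℕ => tgen k p ^ i) := by
      rw [span_tgen]; trivial
    induction ha using Submodule.span_induction with
    | mem x hx =>
        induction hb using Submodule.span_induction with
        | mem y hy =>
            obtain ⟨r, rfl⟩ := hx
            obtain ⟨ℓ, rfl⟩ := hy
            exact main1 r ℓ
        | zero => rw [tmul_zero, LinearMap.map_zero, LinearMap.map_zero]
        | add y z _ _ ihy ihz => rw [tmul_add, LinearMap.map_add, LinearMap.map_add,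
            ihy, ihz]
        | smul c y _ ihy => rw [tmul_smul, LinearMap.map_smul, LinearMap.map_smul, ihy]
    | zero => rw [zero_tmul, LinearMap.map_zero, LinearMap.map_zero]
    | add x y _ _ ihx ihy => rw [add_tmul, LinearMap.map_add, LinearMap.map_add,
        ihx, ihy]
    | smul c x _ ihx => rw [← smul_tmul', LinearMap.map_smul, LinearMap.map_smul, ihx]
  have H2 : ∀ a b : TruncPoly k p, τ (σ (a ⊗ₜ[k] b)) = a ⊗ₜ[k] b := by
    intro a b
    have ha : a ∈ Submodule.span k (Set.range fun i : ℕ => tgen k p ^ i) := by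
      rw [span_tgen]; trivial
    have hb : b ∈ Submodule.span k (Set.range fun i : ℕ => tgen k p ^ i) := by
      rw [span_tgen]; trivial
    induction ha using Submodule.span_induction with
    | mem x hx =>
        induction hb using Submodule.span_induction with
        | mem y hy =>
            obtain ⟨ℓ, rfl⟩ := hx
            obtain ⟨r, rfl⟩ := hy
            exact main2 ℓ r
        | zero => rw [tmul_zero, LinearMap.map_zero, LinearMap.map_zero]
        | add y z _ _ ihy ihz => rw [tmul_add, LinearMap.map_add, LinearMap.map_add,
            ihy, ihz]
        | smul c y _ ihy => rw [tmul_smul, LinearMap.map_smul, LinearMap.map_smul, ihy]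
    | zero => rw [zero_tmul, LinearMap.map_zero, LinearMap.map_zero]
    | add x y _ _ ihx ihy => rw [add_tmul, LinearMap.map_add, LinearMap.map_add,
        ihx, ihy]
    | smul c x _ ihx => rw [← smul_tmul', LinearMap.map_smul, LinearMap.map_smul, ihx]
  have hστ : σ.comp τ = LinearMap.id := TensorProduct.ext' fun a b => H1 a b
  have hτσ : τ.comp σ = LinearMap.id := TensorProduct.ext' fun a b => H2 a b
  refine ⟨⟨?_, ?_⟩, hστ, hτσ⟩
  · intro x y hxy
    have h3 := congrArg σ hxy
    have h1 := LinearMap.congr_fun hστ x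
    have h2 := LinearMap.congr_fun hστ y
    simp only [LinearMap.comp_apply, LinearMap.id_apply] at h1 h2
    rw [h1, h2] at h3
    exact h3
  · intro y
    refine ⟨σ y, ?_⟩
    have h1 := LinearMap.congr_fun hτσ y
    simpa using h1
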